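/- For any k ≥ 2, every k-type Swap Schelling Game played on an almost regular graph (maximum degree minus minimum degree equals 1) has the finite improvement property; in particular, every sequence of profitable swaps has length at most m, the number of edges of the graph. -/

import Mathlib

open SimpleGraph Finset
open scoped Classical

noncomputable def ssgUtil {V A : Type*} [Fintype V] [DecidableEq V]
    (G : SimpleGraph V) [DecidableRel G.Adj]
    {k : ℕ} (c : A → Fin k) (σ : A ≃ V) (i : A) : ℚ :=
  (((G.neighborFinset (σ i)).filter (fun v => c (σ.symm v) = c i)).card : ℚ) /
    (G.degree (σ i) : ℚ)

def ssgSwap {V A : Type*} [DecidableEq V] (σ : A ≃ V) (i j : A) : A ≃ V :=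
  σ.trans (Equiv.swap (σ i) (σ j))

def ssgProfitable {V A : Type*} [Fintype V] [DecidableEq V]
    (G : SimpleGraph V) [DecidableRel G.Adj]
    {k : ℕ} (c : A → Fin k) (σ : A ≃ V) (i j : A) : Prop :=
  c i ≠ c j ∧
    ssgUtil G c σ i < ssgUtil G c (ssgSwap σ i j) i ∧
    ssgUtil G c σ j < ssgUtil G c (ssgSwap σ i j) j

def ssgEquilibrium {V A : Type*} [Fintype V] [DecidableEq V]
    (G : SimpleGraph V) [DecidableRel G.Adj]
    {k : ℕ} (c : A → Fin k) (σ : A ≃ V) : Prop :=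
  ∀ i j : A, ¬ ssgProfitable G c σ i j

def ssgLocalEquilibrium {V A : Type*} [Fintype V] [DecidableEq V]
    (G : SimpleGraph V) [DecidableRel G.Adj]
    {k : ℕ} (c : A → Fin k) (σ : A ≃ V) : Prop :=
  ∀ i j : A, G.Adj (σ i) (σ j) → ¬ ssgProfitable G c σ i j

noncomputable def ssgWelfare {V A : Type*} [Fintype V] [DecidableEq V] [Fintype A]
    (G : SimpleGraph V) [DecidableRel G.Adj]
    {k : ℕ} (c : A → Fin k) (σ : A ≃ V) : ℚ :=
  ∑ i : A, ssgUtil G c σ i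

noncomputable def ssgPhi {V A : Type*} [Fintype V] [DecidableEq V]
    (G : SimpleGraph V) [DecidableRel G.Adj]
    {k : ℕ} (c : A → Fin k) (σ : A ≃ V) : ℕ :=
  (G.edgeFinset.filter (fun e => ∀ u ∈ e, ∀ v ∈ e, c (σ.symm u) = c (σ.symm v))).card


section MyAux
variable {V A : Type*} [Fintype V] [DecidableEq V]

lemma ssg_arith (a b a' b' du dv : ℕ) (hdu : 1 ≤ du) (hdv : 1 ≤ dv)
    (ha' : a' ≤ dv) (hb' : b' ≤ du)
    (hd : du = dv ∨ du = dv + 1 ∨ dv = du + 1)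
    (h1 : a * dv < a' * du) (h2 : b * du < b' * dv) : a + b < a' + b' := by
  rcases hd with rfl | rfl | rfl
  · have ha : a < a' := lt_of_mul_lt_mul_right h1 (Nat.zero_le _)
    have hb : b < b' := lt_of_mul_lt_mul_right h2 (Nat.zero_le _)
    omega
  · rw [Nat.mul_succ] at h1 h2
    have hb : b < b' := by
      by_contra hb
      push_neg at hb
      have : b' * dv ≤ b * dv := Nat.mul_le_mul_right _ hb
      linarith
    have ha : a ≤ a' := by
      by_contra ha
      push_neg at ha
      have hm : (a' + 1) * dv ≤ a * dv := Nat.mul_le_mul_right _ (by omega)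
      rw [Nat.succ_mul] at hm
      linarith
    omega
  · rw [Nat.mul_succ] at h1 h2
    have ha : a < a' := by
      by_contra ha
      push_neg at ha
      have : a' * du ≤ a * du := Nat.mul_le_mul_right _ ha
      linarith
    have hb : b ≤ b' := by
      by_contra hb
      push_neg at hb
      have hm : (b' + 1) * du ≤ b * du := Nat.mul_le_mul_right _ (by omega)
      rw [Nat.succ_mul] at hm
      linarith
    omega

lemma ssg_count (G : SimpleGraph V) [DecidableRel G.Adj] {k : ℕ} (c : A → Fin k)
    (τ : A ≃ V) (w z : V)
    (hcz : c (τ.symm z) ≠ c (τ.symm w)) :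
    ((G.edgeFinset.filter (fun e => ∀ x ∈ e, ∀ y ∈ e, c (τ.symm x) = c (τ.symm y))).filter
        (fun e => w ∈ e ∧ ¬ z ∈ e)).card
      = ((G.neighborFinset w).filter (fun x => c (τ.symm x) = c (τ.symm w))).card := by
  refine (Finset.card_bij (fun x _ => s(w, x)) ?_ ?_ ?_).symm
  · intro x hx
    simp only [Finset.mem_filter, SimpleGraph.mem_neighborFinset] at hx
    obtain ⟨hadj, hcx⟩ := hx
    refine Finset.mem_filter.mpr ⟨Finset.mem_filter.mpr ⟨?_, ?_⟩, ?_, ?_⟩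
    · rw [SimpleGraph.mem_edgeFinset, SimpleGraph.mem_edgeSet]
      exact hadj
    · intro p hp q hq
      rw [Sym2.mem_iff] at hp hq
      rcases hp with rfl | rfl <;> rcases hq with rfl | rfl
      · rfl
      · exact hcx.symm
      · exact hcx
      · rfl
    · rw [Sym2.mem_iff]
      exact Or.inl rfl
    · rw [Sym2.mem_iff]
      rintro (rfl | rfl)
      · exact hcz rfl
      · exact hcz hcx
  · intro x hx y hy hxy
    simp only [Finset.mem_filter, SimpleGraph.mem_neighborFinset] at hx hy
    rw [Sym2.eq_iff] at hxy
    rcases hxy with ⟨-, h⟩ | ⟨h1, -⟩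
    · exact h
    · exact absurd h1 (G.ne_of_adj hy.1)
  · intro e he
    revert he
    induction e using Sym2.ind with
    | _ p q =>
      intro he
      simp only [Finset.mem_filter, SimpleGraph.mem_edgeFinset, SimpleGraph.mem_edgeSet,
        Sym2.mem_iff] at he
      obtain ⟨⟨hadj, hP⟩, hw, hz⟩ := he
      rcases hw with rfl | rfl
      · exact ⟨q, by
          simp only [Finset.mem_filter, SimpleGraph.mem_neighborFinset]
          exact ⟨hadj, hP q (Or.inr rfl) w (Or.inl rfl)⟩, rfl⟩
      · exact ⟨p, by
          simp only [Finset.mem_filter, SimpleGraph.mem_neighborFinset]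
          exact ⟨hadj.symm, hP p (Or.inl rfl) w (Or.inr rfl)⟩, Sym2.eq_swap⟩

lemma ssg_both (G : SimpleGraph V) [DecidableRel G.Adj] {k : ℕ} (c : A → Fin k)
    (τ : A ≃ V) (u v : V)
    (hne : c (τ.symm v) ≠ c (τ.symm u)) :
    ((G.edgeFinset.filter (fun e => ∀ x ∈ e, ∀ y ∈ e, c (τ.symm x) = c (τ.symm y))).filter
        (fun e => u ∈ e ∧ v ∈ e)) = ∅ := by
  rw [Finset.eq_empty_iff_forall_notMem]
  intro e he
  simp only [Finset.mem_filter] at he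
  exact hne (he.1.2 v he.2.2 u he.2.1)

end MyAux


lemma ssg_phi_lt {V A : Type*} [Fintype V] [DecidableEq V]
    (G : SimpleGraph V) [DecidableRel G.Adj]
    (hdeg : ∀ x, 0 < G.degree x)
    (hreg : ∀ x y : V, G.degree x = G.degree y ∨ G.degree x = G.degree y + 1 ∨
      G.degree y = G.degree x + 1)
    {k : ℕ} (c : A → Fin k) (σ : A ≃ V) (i j : A)
    (h : ssgProfitable G c σ i j) :
    ssgPhi G c σ < ssgPhi G c (ssgSwap σ i j) := by
  obtain ⟨hcij, hui, huj⟩ := h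
  set σ' := ssgSwap σ i j with hσ'
  set u := σ i with hu
  set v := σ j with hv
  have hij : i ≠ j := fun h => hcij (by rw [h])
  have huv : u ≠ v := fun h => hij (σ.injective h)
  have hsymu : σ.symm u = i := σ.symm_apply_apply i
  have hsymv : σ.symm v = j := σ.symm_apply_apply j
  have hs' : ∀ x, σ'.symm x = σ.symm (Equiv.swap u v x) := by
    intro x; simp [hσ', ssgSwap]; rfl
  have hσ'i : σ' i = v := by
    simp [hσ', ssgSwap, ← hu, ← hv]
  have hσ'j : σ' j = u := by
    simp [hσ', ssgSwap, ← hu, ← hv]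
  have hs'u : σ'.symm u = j := by rw [hs', Equiv.swap_apply_left, hsymv]
  have hs'v : σ'.symm v = i := by rw [hs', Equiv.swap_apply_right, hsymu]
  have hs'o : ∀ x, x ≠ u → x ≠ v → σ'.symm x = σ.symm x := fun x h1 h2 => by
    rw [hs', Equiv.swap_apply_of_ne_of_ne h1 h2]
  -- utilities to integer inequalities
  unfold ssgUtil at hui huj
  rw [hσ'i] at hui
  rw [hσ'j] at huj
  rw [← hu] at hui
  rw [← hv] at huj
  set a := ((G.neighborFinset u).filter (fun x => c (σ.symm x) = c i)).card with hadef
  set b := ((G.neighborFinset v).filter (fun x => c (σ.symm x) = c j)).card with hbdef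
  set a' := ((G.neighborFinset v).filter (fun x => c (σ'.symm x) = c i)).card with ha'def
  set b' := ((G.neighborFinset u).filter (fun x => c (σ'.symm x) = c j)).card with hb'def
  have h0u : (0:ℚ) < (G.degree u : ℚ) := by exact_mod_cast hdeg u
  have h0v : (0:ℚ) < (G.degree v : ℚ) := by exact_mod_cast hdeg v
  rw [div_lt_div_iff₀ h0u h0v] at hui
  rw [div_lt_div_iff₀ h0v h0u] at huj
  have h1 : a * G.degree v < a' * G.degree u := by exact_mod_cast hui
  have h2 : b * G.degree u < b' * G.degree v := by exact_mod_cast huj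
  -- counting
  have hsplit : ∀ τ : A ≃ V,
      (G.edgeFinset.filter (fun e => ∀ x ∈ e, ∀ y ∈ e, c (τ.symm x) = c (τ.symm y))).card =
      ((G.edgeFinset.filter (fun e => ∀ x ∈ e, ∀ y ∈ e, c (τ.symm x) = c (τ.symm y))).filter
          (fun e => u ∈ e ∧ v ∈ e)).card +
      ((G.edgeFinset.filter (fun e => ∀ x ∈ e, ∀ y ∈ e, c (τ.symm x) = c (τ.symm y))).filter
          (fun e => u ∈ e ∧ ¬ v ∈ e)).card +
      ((G.edgeFinset.filter (fun e => ∀ x ∈ e, ∀ y ∈ e, c (τ.symm x) = c (τ.symm y))).filter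
          (fun e => v ∈ e ∧ ¬ u ∈ e)).card +
      ((G.edgeFinset.filter (fun e => ∀ x ∈ e, ∀ y ∈ e, c (τ.symm x) = c (τ.symm y))).filter
          (fun e => ¬ u ∈ e ∧ ¬ v ∈ e)).card := by
    intro τ
    set s := G.edgeFinset.filter (fun e => ∀ x ∈ e, ∀ y ∈ e, c (τ.symm x) = c (τ.symm y))
      with hs
    have A1 := Finset.card_filter_add_card_filter_not (s := s) (p := fun e => u ∈ e)
    have B1 := Finset.card_filter_add_card_filter_not
      (s := s.filter (fun e => u ∈ e)) (p := fun e => v ∈ e)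
    have C1 := Finset.card_filter_add_card_filter_not
      (s := s.filter (fun e => ¬ u ∈ e)) (p := fun e => v ∈ e)
    rw [← Finset.filter_filter, ← Finset.filter_filter, ← Finset.filter_filter,
      ← Finset.filter_filter,
      Finset.filter_comm (p := fun e => v ∈ e) (q := fun e => ¬ u ∈ e) s]
    omega
  have hcvu : c (σ.symm v) ≠ c (σ.symm u) := by
    rw [hsymu, hsymv]; exact fun h => hcij h.symm
  have hcvu' : c (σ'.symm v) ≠ c (σ'.symm u) := by
    rw [hs'u, hs'v]; exact hcij
  have hcuv : c (σ.symm u) ≠ c (σ.symm v) := fun h => hcvu h.symm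
  have hcuv' : c (σ'.symm u) ≠ c (σ'.symm v) := fun h => hcvu' h.symm
  -- counts for σ
  have hza := ssg_count G c σ u v hcvu
  simp only [hsymu] at hza
  have hzb := ssg_count G c σ v u hcuv
  simp only [hsymv] at hzb
  have hza' := ssg_count G c σ' v u hcuv'
  simp only [hs'v] at hza'
  have hzb' := ssg_count G c σ' u v hcvu'
  simp only [hs'u] at hzb'
  have hb0 := ssg_both G c σ u v hcvu
  have hb0' := ssg_both G c σ' u v hcvu'
  -- rest invariance
  have hrest : ((G.edgeFinset.filter (fun e => ∀ x ∈ e, ∀ y ∈ e, c (σ.symm x) = c (σ.symm y))).filter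
          (fun e => ¬ u ∈ e ∧ ¬ v ∈ e))
      = ((G.edgeFinset.filter (fun e => ∀ x ∈ e, ∀ y ∈ e, c (σ'.symm x) = c (σ'.symm y))).filter
          (fun e => ¬ u ∈ e ∧ ¬ v ∈ e)) := by
    rw [Finset.filter_filter, Finset.filter_filter]
    refine Finset.filter_congr (fun e _ => ?_)
    constructor
    · rintro ⟨hP, hu', hv'⟩
      refine ⟨fun x hx y hy => ?_, hu', hv'⟩
      rw [hs'o x (fun h => hu' (h ▸ hx)) (fun h => hv' (h ▸ hx)),
        hs'o y (fun h => hu' (h ▸ hy)) (fun h => hv' (h ▸ hy))]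
      exact hP x hx y hy
    · rintro ⟨hP, hu', hv'⟩
      refine ⟨fun x hx y hy => ?_, hu', hv'⟩
      rw [← hs'o x (fun h => hu' (h ▸ hx)) (fun h => hv' (h ▸ hx)),
        ← hs'o y (fun h => hu' (h ▸ hy)) (fun h => hv' (h ▸ hy))]
      exact hP x hx y hy
  have e1 := hsplit σ
  have e2 := hsplit σ'
  rw [hb0, hza, hzb, hrest] at e1
  rw [hb0', hza', hzb'] at e2
  have hkey : a + b < a' + b' := by
    refine ssg_arith a b a' b' (G.degree u) (G.degree v) (hdeg u) (hdeg v) ?_ ?_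
      (hreg u v) h1 h2
    · exact le_trans (Finset.card_filter_le _ _) (le_of_eq rfl)
    · exact le_trans (Finset.card_filter_le _ _) (le_of_eq rfl)
  unfold ssgPhi
  rw [e1, e2]
  simp only [Finset.card_empty]
  omega

theorem stmt3 {V A : Type*} [Fintype V] [DecidableEq V]
    (G : SimpleGraph V) [DecidableRel G.Adj] (hconn : G.Connected)
    (halmost : G.maxDegree - G.minDegree = 1)
    {k : ℕ} (hk : 2 ≤ k) (c : A → Fin k)
    (L : ℕ) (σseq : ℕ → (A ≃ V))
    (hstep : ∀ q < L, ∃ i j : A,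
      ssgProfitable G c (σseq q) i j ∧ σseq (q + 1) = ssgSwap (σseq q) i j) :
    L ≤ G.edgeFinset.card := by
  have hM : G.maxDegree = G.minDegree + 1 := by omega
  have hdeg : ∀ x, 0 < G.degree x := by
    have : Nonempty V := hconn.nonempty
    obtain ⟨w, hw⟩ := G.exists_maximal_degree_vertex
    have hw1 : 0 < G.degree w := by omega
    rw [SimpleGraph.degree_pos_iff_exists_adj] at hw1
    obtain ⟨y, hwy⟩ := hw1
    intro x
    rw [SimpleGraph.degree_pos_iff_exists_adj]
    obtain ⟨p⟩ := hconn.preconnected x w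
    cases p with
    | nil => exact ⟨y, hwy⟩
    | cons hadj _ => exact ⟨_, hadj⟩
  have hreg : ∀ x y : V, G.degree x = G.degree y ∨ G.degree x = G.degree y + 1 ∨
      G.degree y = G.degree x + 1 := by
    intro x y
    have h1 := G.minDegree_le_degree x
    have h2 := G.degree_le_maxDegree x
    have h3 := G.minDegree_le_degree y
    have h4 := G.degree_le_maxDegree y
    omega
  have key : ∀ q, q ≤ L → ssgPhi G c (σseq 0) + q ≤ ssgPhi G c (σseq q) := by
    intro q
    induction q with
    | zero => intro _; omega
    | succ n ih =>
      intro hq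
      obtain ⟨i, j, hprof, hnext⟩ := hstep n (by omega)
      have hlt := ssg_phi_lt G hdeg hreg c (σseq n) i j hprof
      rw [← hnext] at hlt
      have hn := ih (by omega)
      omega
  have hL := key L le_rfl
  have hle : ssgPhi G c (σseq L) ≤ G.edgeFinset.card := by
    unfold ssgPhi
    exact Finset.card_filter_le _ _
  omega
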